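/- Let V ⊆ ℝⁿ be open, f : V → ℝⁿ a C¹ map, x₀ ∈ V, R > 0 with the closed ball B_R(x₀) ⊆ V. Suppose C ≥ 1 is such that f is C-Lipschitz on B_R(x₀), Df(x₀) is invertible with ‖Df(x₀)⁻¹‖ ≤ C, and ‖Df(x) - Df(x₀)‖ ≤ 1/(4C) for all x ∈ B_R(x₀). Then for any r ≤ R/(2C) and any open set W with B_r(f(x₀)) ⊆ W ⊆ B_{R/(2C)}(f(x₀)), the preimage U := f⁻¹(W) ∩ B_R(x₀) contains B_{r/C}(x₀) and f restricted to U is a diffeomorphism onto W. -/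

import Mathlib

noncomputable section

open Metric

set_option maxHeartbeats 1000000 in
/-- **quantitative inverse function theorem.** Let `V ⊆ ℝⁿ` be open,
`f : V → ℝⁿ` a `C¹` map, `x₀ ∈ V`, `R > 0` with `closedBall x₀ R ⊆ V`. Suppose `C ≥ 1` is
such that `f` is `C`-Lipschitz on the ball, `Df(x₀)` is invertible with
`‖Df(x₀)⁻¹‖ ≤ C`, and `‖Df(x) - Df(x₀)‖ ≤ 1/(4C)` on the ball. Then for any
`r ≤ R/(2C)` and any open `W` with `ball (f x₀) r ⊆ W ⊆ ball (f x₀) (R/(2C))`, the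
preimage `U := f⁻¹(W) ∩ ball x₀ R` contains `ball x₀ (r/C)` and `f` restricted to `U` is a
(`C¹`-)diffeomorphism onto `W`. -/
theorem quantitative_inverse_function {n : ℕ}
    (V : Set (EuclideanSpace ℝ (Fin n))) (hV : IsOpen V)
    (f : EuclideanSpace ℝ (Fin n) → EuclideanSpace ℝ (Fin n))
    (hf : ContDiffOn ℝ 1 f V)
    (x₀ : EuclideanSpace ℝ (Fin n)) (hx₀ : x₀ ∈ V)
    (R : ℝ) (hR : 0 < R) (hball : closedBall x₀ R ⊆ V)
    (C : ℝ) (hC : 1 ≤ C)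
    (hlip : LipschitzOnWith (Real.toNNReal C) f (closedBall x₀ R))
    (A : EuclideanSpace ℝ (Fin n) ≃L[ℝ] EuclideanSpace ℝ (Fin n))
    (hA : (A : EuclideanSpace ℝ (Fin n) →L[ℝ] EuclideanSpace ℝ (Fin n)) = fderiv ℝ f x₀)
    (hAinv : ‖(A.symm : EuclideanSpace ℝ (Fin n) →L[ℝ] EuclideanSpace ℝ (Fin n))‖ ≤ C)
    (hDf : ∀ x ∈ closedBall x₀ R, ‖fderiv ℝ f x - fderiv ℝ f x₀‖ ≤ 1 / (4 * C))
    (r : ℝ) (hrR : r ≤ R / (2 * C))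
    (W : Set (EuclideanSpace ℝ (Fin n))) (hWopen : IsOpen W)
    (hW1 : ball (f x₀) r ⊆ W) (hW2 : W ⊆ ball (f x₀) (R / (2 * C))) :
    ball x₀ (r / C) ⊆ f ⁻¹' W ∩ ball x₀ R ∧
    ∃ g : EuclideanSpace ℝ (Fin n) → EuclideanSpace ℝ (Fin n),
      ContDiffOn ℝ 1 g W ∧
      Set.BijOn f (f ⁻¹' W ∩ ball x₀ R) W ∧
      (∀ x ∈ f ⁻¹' W ∩ ball x₀ R, g (f x) = x) ∧
      (∀ y ∈ W, f (g y) = y) := by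
  have hC0 : (0 : ℝ) < C := lt_of_lt_of_le one_pos hC
  set c : NNReal := Real.toNNReal (1 / (4 * C)) with hc_def
  have hc_coe : (c : ℝ) = 1 / (4 * C) := Real.coe_toNNReal _ (by positivity)
  -- differentiability at points of the closed ball
  have hdiff : ∀ x ∈ closedBall x₀ R, HasFDerivAt f (fderiv ℝ f x) x := by
    intro x hx
    exact ((hf.contDiffAt (hV.mem_nhds (hball hx))).differentiableAt one_ne_zero).hasFDerivAt
  -- f approximates A linearly on the closed ball
  have approx : ApproximatesLinearOn f
      (A : EuclideanSpace ℝ (Fin n) →L[ℝ] EuclideanSpace ℝ (Fin n)) (closedBall x₀ R) c := by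
    intro x hx y hy
    rw [hc_coe]
    exact Convex.norm_image_sub_le_of_norm_hasFDerivWithin_le'
      (f' := fun z => fderiv ℝ f z)
      (fun z hz => (hdiff z hz).hasFDerivWithinAt)
      (fun z hz => by rw [hA]; exact hDf z hz)
      (convex_closedBall x₀ R) hy hx
  -- lower bound: ‖f x - f x₀‖ ≥ (3/(4C)) ‖x - x₀‖
  have key : ∀ x ∈ closedBall x₀ R, 3 / (4 * C) * ‖x - x₀‖ ≤ ‖f x - f x₀‖ := by
    intro x hx
    have h1 : ‖x - x₀‖ ≤ C * ‖(A : EuclideanSpace ℝ (Fin n) →L[ℝ]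
        EuclideanSpace ℝ (Fin n)) (x - x₀)‖ := by
      calc ‖x - x₀‖
          = ‖A.symm ((A : EuclideanSpace ℝ (Fin n) →L[ℝ] EuclideanSpace ℝ (Fin n)) (x - x₀))‖ := by
            rw [show ((A : EuclideanSpace ℝ (Fin n) →L[ℝ] EuclideanSpace ℝ (Fin n)) (x - x₀))
              = A (x - x₀) from rfl, ContinuousLinearEquiv.symm_apply_apply]
        _ ≤ ‖(A.symm : EuclideanSpace ℝ (Fin n) →L[ℝ] EuclideanSpace ℝ (Fin n))‖ *
            ‖(A : EuclideanSpace ℝ (Fin n) →L[ℝ] EuclideanSpace ℝ (Fin n)) (x - x₀)‖ :=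
            (A.symm : EuclideanSpace ℝ (Fin n) →L[ℝ] EuclideanSpace ℝ (Fin n)).le_opNorm _
        _ ≤ _ := mul_le_mul_of_nonneg_right hAinv (norm_nonneg _)
    have h2 : ‖f x - f x₀ - (A : EuclideanSpace ℝ (Fin n) →L[ℝ]
        EuclideanSpace ℝ (Fin n)) (x - x₀)‖ ≤ (1 / (4 * C)) * ‖x - x₀‖ := by
      have := approx x hx x₀ (mem_closedBall_self hR.le)
      rwa [hc_coe] at this
    have h3 : ‖(A : EuclideanSpace ℝ (Fin n) →L[ℝ] EuclideanSpace ℝ (Fin n)) (x - x₀)‖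
        ≤ ‖f x - f x₀‖ + ‖f x - f x₀ - (A : EuclideanSpace ℝ (Fin n) →L[ℝ]
          EuclideanSpace ℝ (Fin n)) (x - x₀)‖ := by
      have h := norm_sub_le (f x - f x₀) (f x - f x₀ - (A : EuclideanSpace ℝ (Fin n) →L[ℝ]
        EuclideanSpace ℝ (Fin n)) (x - x₀))
      have heq : f x - f x₀ - (f x - f x₀ - (A : EuclideanSpace ℝ (Fin n) →L[ℝ]
          EuclideanSpace ℝ (Fin n)) (x - x₀)) = (A : EuclideanSpace ℝ (Fin n) →L[ℝ]
          EuclideanSpace ℝ (Fin n)) (x - x₀) := by abel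
      rw [heq] at h
      exact h
    have h2' : 4 * C * ‖f x - f x₀ - (A : EuclideanSpace ℝ (Fin n) →L[ℝ]
        EuclideanSpace ℝ (Fin n)) (x - x₀)‖ ≤ ‖x - x₀‖ := by
      have h4 := mul_le_mul_of_nonneg_left h2 (show (0:ℝ) ≤ 4 * C by positivity)
      calc 4 * C * ‖f x - f x₀ - (A : EuclideanSpace ℝ (Fin n) →L[ℝ]
            EuclideanSpace ℝ (Fin n)) (x - x₀)‖
          ≤ 4 * C * (1 / (4 * C) * ‖x - x₀‖) := h4
        _ = ‖x - x₀‖ := by field_simp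
    rw [div_mul_eq_mul_div, div_le_iff₀ (show (0:ℝ) < 4 * C by positivity)]
    linarith [h1, mul_le_mul_of_nonneg_left h3 hC0.le, h2']
  have hNpos : Nontrivial (EuclideanSpace ℝ (Fin n)) →
      0 < ‖(A.symm : EuclideanSpace ℝ (Fin n) →L[ℝ] EuclideanSpace ℝ (Fin n))‖ := by
    intro h
    obtain ⟨v, hv⟩ := exists_ne (0 : EuclideanSpace ℝ (Fin n))
    have hv' : 0 < ‖v‖ := norm_pos_iff.2 hv
    have hle : ‖v‖ ≤ ‖(A.symm : EuclideanSpace ℝ (Fin n) →L[ℝ] EuclideanSpace ℝ (Fin n))‖ *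
        ‖(A : EuclideanSpace ℝ (Fin n) →L[ℝ] EuclideanSpace ℝ (Fin n)) v‖ := by
      calc ‖v‖ = ‖A.symm ((A : EuclideanSpace ℝ (Fin n) →L[ℝ] EuclideanSpace ℝ (Fin n)) v)‖ := by
            rw [show ((A : EuclideanSpace ℝ (Fin n) →L[ℝ] EuclideanSpace ℝ (Fin n)) v) = A v
              from rfl, ContinuousLinearEquiv.symm_apply_apply]
        _ ≤ _ := (A.symm : EuclideanSpace ℝ (Fin n) →L[ℝ]
            EuclideanSpace ℝ (Fin n)).le_opNorm _
    by_contra hcon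
    push_neg at hcon
    have h0 : ‖(A.symm : EuclideanSpace ℝ (Fin n) →L[ℝ]
        EuclideanSpace ℝ (Fin n))‖ = 0 := le_antisymm hcon (norm_nonneg _)
    rw [h0, zero_mul] at hle
    linarith
  -- the smallness condition needed by the mathlib machinery
  have hc : Subsingleton (EuclideanSpace ℝ (Fin n)) ∨
      c < ‖(A.symm : EuclideanSpace ℝ (Fin n) →L[ℝ] EuclideanSpace ℝ (Fin n))‖₊⁻¹ := by
    rcases subsingleton_or_nontrivial (EuclideanSpace ℝ (Fin n)) with h | h
    · exact Or.inl h
    · right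
      have hN := hNpos h
      rw [← NNReal.coe_lt_coe, NNReal.coe_inv, hc_coe, coe_nnnorm]
      have h1C : 1 / C ≤ ‖(A.symm : EuclideanSpace ℝ (Fin n) →L[ℝ]
          EuclideanSpace ℝ (Fin n))‖⁻¹ := by
        rw [one_div]
        exact inv_anti₀ hN hAinv
      have : 1 / (4 * C) < 1 / C := by
        rw [div_lt_div_iff₀ (by positivity) hC0]
        nlinarith
      linarith
  have hrR' : r * (2 * C) ≤ R := by
    rwa [le_div_iff₀ (by positivity)] at hrR
  -- the small ball is contained in the preimage
  have hsub : ball x₀ (r / C) ⊆ f ⁻¹' W ∩ ball x₀ R := by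
    intro x hx
    rw [mem_ball] at hx
    have hx' : dist x x₀ * C < r := by rwa [← lt_div_iff₀ hC0]
    have hr0 : 0 < r := lt_of_le_of_lt (mul_nonneg dist_nonneg hC0.le) hx'
    have hxR : dist x x₀ < R := by
      nlinarith [dist_nonneg (x := x) (y := x₀), mul_nonneg
        (dist_nonneg (x := x) (y := x₀)) (sub_nonneg.2 hC)]
    refine ⟨hW1 ?_, mem_ball.2 hxR⟩
    have hdist : dist (f x) (f x₀) ≤ C * dist x x₀ := by
      have := hlip.dist_le_mul x (mem_closedBall.2 hxR.le) x₀ (mem_closedBall_self hR.le)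
      rwa [Real.coe_toNNReal C hC0.le] at this
    exact mem_ball.2 (lt_of_le_of_lt hdist (by linarith [hx', mul_comm C (dist x x₀)]))
  -- surjectivity onto W with preimages in the open ball
  have hsurj : ∀ y ∈ W, ∃ x ∈ ball x₀ R, f x = y := by
    intro y hy
    rcases subsingleton_or_nontrivial (EuclideanSpace ℝ (Fin n)) with h | h
    · exact ⟨x₀, mem_ball_self hR, Subsingleton.elim _ _⟩
    · have hN := hNpos h
      have hinv : C⁻¹ ≤ ‖(A.symm : EuclideanSpace ℝ (Fin n) →L[ℝ]
          EuclideanSpace ℝ (Fin n))‖⁻¹ := inv_anti₀ hN hAinv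
      have hsurjball := approx.surjOn_closedBall_of_nonlinearRightInverse
        A.toNonlinearRightInverse hR.le (Set.Subset.rfl)
      have hymem : y ∈ closedBall (f x₀)
          (((A.toNonlinearRightInverse.nnnorm : ℝ)⁻¹ - c) * R) := by
        have h1 : (A.toNonlinearRightInverse.nnnorm : ℝ) =
            ‖(A.symm : EuclideanSpace ℝ (Fin n) →L[ℝ] EuclideanSpace ℝ (Fin n))‖ := rfl
        have h2 := hW2 hy
        rw [mem_ball] at h2
        rw [mem_closedBall]
        have hCinv : (0:ℝ) < C⁻¹ := inv_pos.2 hC0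
        have hstep : R / (2 * C) ≤ ((A.toNonlinearRightInverse.nnnorm : ℝ)⁻¹ - c) * R := by
          rw [h1, hc_coe]
          have e1 : R / (2 * C) = C⁻¹ / 2 * R := by
            field_simp
          have e2 : (1 : ℝ) / (4 * C) = C⁻¹ / 4 := by
            field_simp
          rw [e1, e2]
          nlinarith [hinv, hR.le, hCinv]
        linarith
      obtain ⟨x, hx1, hx2⟩ := hsurjball hymem
      refine ⟨x, mem_ball.2 ?_, hx2⟩
      have hk := key x hx1
      rw [hx2] at hk
      have hy2 := hW2 hy
      rw [mem_ball, dist_eq_norm] at hy2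
      rw [dist_eq_norm]
      rw [div_mul_eq_mul_div, div_le_iff₀ (by positivity : (0:ℝ) < 4 * C)] at hk
      rw [lt_div_iff₀ (by positivity : (0:ℝ) < 2 * C)] at hy2
      by_contra hcon
      push_neg at hcon
      nlinarith [hR, norm_nonneg (y - f x₀)]
  -- the partial homeomorphism given by the approximation machinery
  have approx' := approx.mono_set (ball_subset_closedBall (x := x₀) (ε := R))
  set Φ := approx'.toOpenPartialHomeomorph f (ball x₀ R) hc isOpen_ball with hΦ
  have hΦsource : Φ.source = ball x₀ R := rfl
  have hΦtarget : Φ.target = f '' ball x₀ R := rfl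
  have hWtarget : W ⊆ Φ.target := by
    intro y hy
    obtain ⟨x, hx1, hx2⟩ := hsurj y hy
    exact ⟨x, hx1, hx2⟩
  refine ⟨hsub, ⇑Φ.symm, ?_, ?_, ?_, ?_⟩
  · -- smoothness of the inverse
    intro y hy
    have hyt : y ∈ Φ.target := hWtarget hy
    have hxsrc : Φ.symm y ∈ ball x₀ R := Φ.map_target hyt
    have hxcb : Φ.symm y ∈ closedBall x₀ R := ball_subset_closedBall hxsrc
    have hxV : Φ.symm y ∈ V := hball hxcb
    have ht : ‖((A.symm : EuclideanSpace ℝ (Fin n) →L[ℝ] EuclideanSpace ℝ (Fin n)).comp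
        ((A : EuclideanSpace ℝ (Fin n) →L[ℝ] EuclideanSpace ℝ (Fin n))
          - fderiv ℝ f (Φ.symm y)))‖ < 1 := by
      calc ‖((A.symm : EuclideanSpace ℝ (Fin n) →L[ℝ] EuclideanSpace ℝ (Fin n)).comp
          ((A : EuclideanSpace ℝ (Fin n) →L[ℝ] EuclideanSpace ℝ (Fin n))
            - fderiv ℝ f (Φ.symm y)))‖
          ≤ ‖(A.symm : EuclideanSpace ℝ (Fin n) →L[ℝ] EuclideanSpace ℝ (Fin n))‖ *
            ‖(A : EuclideanSpace ℝ (Fin n) →L[ℝ] EuclideanSpace ℝ (Fin n))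
              - fderiv ℝ f (Φ.symm y)‖ := ContinuousLinearMap.opNorm_comp_le _ _
        _ ≤ C * (1 / (4 * C)) := by
            apply mul_le_mul hAinv ?_ (norm_nonneg _) hC0.le
            rw [hA, norm_sub_rev]
            exact hDf _ hxcb
        _ < 1 := by rw [mul_one_div]; rw [div_lt_one (by positivity)]; nlinarith
    set u : (EuclideanSpace ℝ (Fin n) →L[ℝ] EuclideanSpace ℝ (Fin n))ˣ :=
      Units.oneSub _ ht with hu_def
    have hu : ((u : EuclideanSpace ℝ (Fin n) →L[ℝ] EuclideanSpace ℝ (Fin n))) =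
        (A.symm : EuclideanSpace ℝ (Fin n) →L[ℝ] EuclideanSpace ℝ (Fin n)).comp
          (fderiv ℝ f (Φ.symm y)) := by
      rw [hu_def, Units.val_oneSub]
      ext v
      simp [ContinuousLinearMap.comp_apply, ContinuousLinearMap.sub_apply, map_sub]
    set e : EuclideanSpace ℝ (Fin n) ≃L[ℝ] EuclideanSpace ℝ (Fin n) :=
      (ContinuousLinearEquiv.ofUnit u).trans A with he_def
    have he : (e : EuclideanSpace ℝ (Fin n) →L[ℝ] EuclideanSpace ℝ (Fin n)) =
        fderiv ℝ f (Φ.symm y) := by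
      refine ContinuousLinearMap.ext fun v => ?_
      show A ((u : EuclideanSpace ℝ (Fin n) →L[ℝ] EuclideanSpace ℝ (Fin n)) v) = _
      rw [hu]
      simp
    have hder : HasFDerivAt f (e : EuclideanSpace ℝ (Fin n) →L[ℝ]
        EuclideanSpace ℝ (Fin n)) (Φ.symm y) := by
      rw [he]; exact hdiff _ hxcb
    have hcd : ContDiffAt ℝ 1 f (Φ.symm y) := hf.contDiffAt (hV.mem_nhds hxV)
    exact (Φ.contDiffAt_symm hyt hder hcd).contDiffWithinAt
  · -- bijectivity
    refine ⟨fun x hx => hx.1, (approx.injOn hc).mono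
      (fun x hx => ball_subset_closedBall hx.2), ?_⟩
    intro y hy
    obtain ⟨x, hx1, hx2⟩ := hsurj y hy
    exact ⟨x, ⟨by rw [Set.mem_preimage, hx2]; exact hy, hx1⟩, hx2⟩
  · intro x hx
    exact Φ.left_inv hx.2
  · intro y hy
    exact Φ.right_inv (hWtarget hy)
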